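/- For all s ∈ (0,1], τ* ∈ [π/2, π) and τ₀ ∈ [0, π/2], there exists r ∈ [−1/2, 1) such that ⋄^{τ*}_{τ₀,s} = {(τ₀, ξ) : ξ ∈ S³, ξ⁴ ≤ r}; in particular each ⋄^{τ*}_{τ₀,s} is a closed geodesic ball (a sublevel set of ξ⁴) in the sphere {τ₀} × S³, of radius bounded below uniformly. -/
import Mathlib



private lemma Emono {c σ x y : ℝ} (hc : 0 < c) (hc1 : c ≤ 1) (hσ : 0 ≤ σ)
    (hx : -c < x) (hxy : x < y) (hy : y ≤ 1) :
    (2*σ + Real.sqrt (1 - y^2)) / (c + y) < (2*σ + Real.sqrt (1 - x^2)) / (c + x) := by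
  have hdx : 0 < c + x := by linarith
  have hdy : 0 < c + y := by linarith
  have hx1 : -1 < x := by linarith
  have hx2 : x < 1 := lt_of_lt_of_le hxy hy
  have h1x : 0 < 1 - x^2 := by nlinarith
  have h1y : 0 ≤ 1 - y^2 := by nlinarith
  have hA : 0 < 1 + c*x := by nlinarith
  have hB : 0 < 1 + c*y := by nlinarith
  have key2 : (Real.sqrt (1-y^2) * (c+x))^2 < (Real.sqrt (1-x^2) * (c+y))^2 := by
    rw [mul_pow, mul_pow, Real.sq_sqrt h1y, Real.sq_sqrt h1x.le]
    have hq := mul_pos (sub_pos.2 hxy) (add_pos (mul_pos hA hdy) (mul_pos hB hdx))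
    nlinarith [hq]
  have key : Real.sqrt (1-y^2) * (c+x) < Real.sqrt (1-x^2) * (c+y) :=
    lt_of_pow_lt_pow_left₀ 2 (mul_nonneg (Real.sqrt_nonneg _) hdy.le) key2
  rw [div_lt_div_iff₀ hdy hdx]
  nlinarith [key, mul_nonneg hσ (by linarith : (0:ℝ) ≤ y - x)]

private lemma Emono' {c σ x y : ℝ} (hc : 0 < c) (hc1 : c ≤ 1) (hσ : 0 ≤ σ)
    (hx : -c < x) (hxy : x ≤ y) (hy : y ≤ 1) :
    (2*σ + Real.sqrt (1 - y^2)) / (c + y) ≤ (2*σ + Real.sqrt (1 - x^2)) / (c + x) := by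
  rcases eq_or_lt_of_le hxy with h | h
  · rw [h]
  · exact (Emono hc hc1 hσ hx h hy).le

set_option maxHeartbeats 2000000 in
/-- The one-dimensional core of Lemma 5.5: the combined constraints cut out exactly
an interval `x ≤ r` with `r ∈ [-1/2, 1)`. -/
private lemma lower_iff (a c σ C : ℝ) (ha0 : 0 < a) (ha6 : a ≤ 1/6)
    (hc0 : 0 ≤ c) (hc1 : c ≤ 1) (hσ0 : 0 ≤ σ) (hpyth : σ^2 + c^2 = 1)
    (hC34 : 3/4 ≤ C) (hC1 : C < 1) :
    ∃ r : ℝ, -(1/2) ≤ r ∧ r < 1 ∧ ∀ x : ℝ, -1 ≤ x → x ≤ 1 →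
      (x ≤ r ↔ (x < c ∧ (0 < c + x → a ≤ (2*σ + Real.sqrt (1-x^2))/(c+x)) ∧
        1 - c ≤ C*(1-x))) := by
  have hC0 : (0:ℝ) < C := by linarith
  obtain ⟨rC, hrCdef⟩ : ∃ rC : ℝ, rC = 1 - (1-c)/C := ⟨_, rfl⟩
  have hdivle : (1-c)/C ≤ 4/3 := by rw [div_le_iff₀ hC0]; nlinarith
  have hrChalf : -(1/2) ≤ rC := by rw [hrCdef]; linarith
  rcases le_or_gt (2*a*c) (3*σ) with hcase | hcase
  · -- Case 1 : the Δ-region is empty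
    have hclt1 : c < 1 := by
      rcases lt_or_ge c 1 with h | h
      · exact h
      · exfalso
        have hc1' : c = 1 := le_antisymm hc1 h
        have hσ2 : σ^2 = 0 := by rw [hc1'] at hpyth; linarith
        have hσz : σ = 0 := by nlinarith
        rw [hσz, hc1'] at hcase
        nlinarith
    have hrCc' : rC < c := by
      have h1 : 1 - c < (1-c)/C := by rw [lt_div_iff₀ hC0]; nlinarith
      rw [hrCdef]; linarith
    refine ⟨rC, hrChalf, by linarith, ?_⟩
    intro x hxl hxu
    constructor
    · intro hxr
      have hxc : x < c := lt_of_le_of_lt hxr hrCc'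
      refine ⟨hxc, ?_, ?_⟩
      · intro hden
        have hsx : σ ≤ Real.sqrt (1 - x^2) := by
          rw [Real.le_sqrt hσ0 (by nlinarith)]
          nlinarith [mul_pos (sub_pos.2 hxc) hden]
        rw [le_div_iff₀ hden]
        nlinarith [mul_pos ha0 (sub_pos.2 hxc)]
      · have h1 : (1-c)/C ≤ 1 - x := by rw [hrCdef] at hxr; linarith
        rw [div_le_iff₀ hC0] at h1
        linarith
    · rintro ⟨hxc, -, hφc⟩
      have h1 : (1-c)/C ≤ 1 - x := by rw [div_le_iff₀ hC0]; linarith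
      rw [hrCdef]; linarith
  · -- Case 2 : the Δ-region reaches down exactly to the level rb
    have hac : a*c ≤ (1/6)*c := mul_le_mul_of_nonneg_right ha6 hc0
    have hσc9 : σ < c/9 := by nlinarith
    have hσ2 : σ^2 ≤ c^2/81 := by
      nlinarith [mul_le_mul_of_nonneg_left hσc9.le hσ0,
        mul_le_mul_of_nonneg_left hσc9.le (show (0:ℝ) ≤ c/9 by linarith)]
    have hc2 : 1/2 < c := by nlinarith
    obtain ⟨D, hDdef⟩ : ∃ D : ℝ, D = a^2*σ^2 + 4*a*σ*c + c^2 - 3*σ^2 := ⟨_, rfl⟩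
    have hD9 : c^2/9 ≤ D := by
      rw [hDdef]
      nlinarith [sq_nonneg (a*σ), mul_nonneg (mul_nonneg ha0.le hσ0) hc0]
    have hD0 : 0 ≤ D := by nlinarith
    obtain ⟨u, hudef⟩ : ∃ u : ℝ, u = Real.sqrt D := ⟨_, rfl⟩
    have hu0 : 0 ≤ u := hudef ▸ Real.sqrt_nonneg D
    have hu2 : u^2 = D := by rw [hudef]; exact Real.sq_sqrt hD0
    have hu3 : c/3 ≤ u := by
      rw [hudef, Real.le_sqrt (by linarith) hD0]
      nlinarith
    obtain ⟨rb, hrbdef⟩ : ∃ rb : ℝ, rb = (2*a*σ - a^2*c + u)/(1 + a^2) := ⟨_, rfl⟩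
    have hta : (0:ℝ) < 1 + a^2 := by positivity
    have hrbeq : rb * (1 + a^2) = 2*a*σ - a^2*c + u := by
      rw [hrbdef]; field_simp
    have hrbgc : -c < rb := by
      nlinarith [hrbeq, hu0, mul_nonneg ha0.le hσ0, sq_nonneg a]
    have hkey : 1 - rb^2 = (a*(c+rb) - 2*σ)^2 := by
      have h2 : (1 - rb^2) * (1+a^2)^2 = (a*(c+rb) - 2*σ)^2 * (1+a^2)^2 := by
        linear_combination (-(1+a^2)) * hu2 - (1+a^2) * hDdef - (1+a^2)^2 * hpyth -
          ((1+a^2) * (rb*(1+a^2) + (2*a*σ - a^2*c + u) + 2*a*(a*c-2*σ))) * hrbeq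
      exact mul_right_cancel₀ (by positivity) h2
    have hau : a*(c/3) ≤ a*u := mul_le_mul_of_nonneg_left hu3 ha0.le
    have hformula : a*(c+rb) - 2*σ = (a*c - 2*σ + a*u)/(1+a^2) := by
      rw [hrbdef]; field_simp; ring
    have hge : 0 ≤ a*(c+rb) - 2*σ := by
      rw [hformula]
      apply div_nonneg _ hta.le
      linarith
    have hsqrt : Real.sqrt (1 - rb^2) = a*(c+rb) - 2*σ := by
      rw [hkey, Real.sqrt_sq hge]
    have hrb1 : rb ≤ 1 := by
      nlinarith [hkey, sq_nonneg (a*(c+rb) - 2*σ), sq_nonneg (rb - 1)]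
    have hcrb : 0 < c + rb := by linarith
    have hErb : (2*σ + Real.sqrt (1 - rb^2))/(c + rb) = a := by
      rw [hsqrt, show 2*σ + (a*(c+rb) - 2*σ) = a*(c+rb) by ring,
        mul_div_assoc, div_self hcrb.ne', mul_one]
    have hrbc : rb < c := by
      by_contra hcon
      push_neg at hcon
      have h1 : (2*σ + Real.sqrt (1 - rb^2))/(c + rb) ≤
          (2*σ + Real.sqrt (1 - c^2))/(c + c) :=
        Emono' (by linarith) hc1 hσ0 (by linarith) hcon hrb1
      rw [hErb] at h1
      rw [show 1 - c^2 = σ^2 by linarith, Real.sqrt_sq hσ0] at h1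
      rw [le_div_iff₀ (by linarith : (0:ℝ) < c + c)] at h1
      nlinarith
    have hrbhalf : -(1/2) ≤ rb := by
      by_contra hcon
      push_neg at hcon
      have h1 : (2*σ + Real.sqrt (1 - (-(1/2):ℝ)^2))/(c + (-(1/2))) <
          (2*σ + Real.sqrt (1 - rb^2))/(c + rb) :=
        Emono (by linarith) hc1 hσ0 hrbgc hcon (by norm_num)
      rw [hErb] at h1
      have h2 : (1:ℝ)/2 ≤ Real.sqrt (1 - (-(1/2):ℝ)^2) := by
        rw [Real.le_sqrt (by norm_num) (by norm_num)]
        norm_num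
      have hden : 0 < c + (-(1/2):ℝ) := by linarith
      have h3 : 1 ≤ (2*σ + Real.sqrt (1 - (-(1/2):ℝ)^2))/(c + (-(1/2))) := by
        rw [le_div_iff₀ hden]
        nlinarith
      linarith
    refine ⟨min rC rb, le_min hrChalf hrbhalf,
      lt_of_le_of_lt (min_le_right _ _) (by linarith), ?_⟩
    intro x hxl hxu
    constructor
    · intro hxr
      have hxrb : x ≤ rb := le_trans hxr (min_le_right _ _)
      have hxrC : x ≤ rC := le_trans hxr (min_le_left _ _)
      have hxc : x < c := lt_of_le_of_lt hxrb hrbc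
      refine ⟨hxc, ?_, ?_⟩
      · intro hden
        have h1 : (2*σ + Real.sqrt (1 - rb^2))/(c + rb) ≤
            (2*σ + Real.sqrt (1 - x^2))/(c + x) :=
          Emono' (by linarith) hc1 hσ0 (by linarith) hxrb hrb1
        rw [hErb] at h1
        exact h1
      · have h1 : (1-c)/C ≤ 1 - x := by rw [hrCdef] at hxrC; linarith
        rw [div_le_iff₀ hC0] at h1
        linarith
    · rintro ⟨hxc, hscond, hφc⟩
      have hxrC : x ≤ rC := by
        have h1 : (1-c)/C ≤ 1 - x := by rw [div_le_iff₀ hC0]; linarith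
        rw [hrCdef]; linarith
      refine le_min hxrC ?_
      by_contra hcon
      push_neg at hcon
      have hden : 0 < c + x := by linarith
      have h1 : (2*σ + Real.sqrt (1 - x^2))/(c + x) <
          (2*σ + Real.sqrt (1 - rb^2))/(c + rb) :=
        Emono (by linarith) hc1 hσ0 hrbgc hcon hxu
      rw [hErb] at h1
      exact absurd (hscond hden) (not_le.2 h1)

/-- The unit three-sphere in `ℝ⁴` (as the set of `ξ : Fin 4 → ℝ` of unit length,
indexed so that `ξ 3 = ξ⁴`). -/
def sphere3 : Set (Fin 4 → ℝ) := {ξ | (ξ 0) ^ 2 + (ξ 1) ^ 2 + (ξ 2) ^ 2 + (ξ 3) ^ 2 = 1}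

/-- `h(τ,ξ) = cos τ - ξ⁴`. -/
noncomputable def hfun (p : ℝ × (Fin 4 → ℝ)) : ℝ := Real.cos p.1 - p.2 3

/-- `ℏ(τ,ξ) = cos τ + ξ⁴`. -/
noncomputable def hbarfun (p : ℝ × (Fin 4 → ℝ)) : ℝ := Real.cos p.1 + p.2 3

/-- `𝔰(τ,ξ) = (2 sin τ + √(1 - (ξ⁴)²)) / ℏ(τ,ξ)`. -/
noncomputable def sfun (p : ℝ × (Fin 4 → ℝ)) : ℝ :=
  (2 * Real.sin p.1 + Real.sqrt (1 - (p.2 3) ^ 2)) / hbarfun p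

/-- The future half of the Minkowski diamond,
`⋄₊ = {(τ,ξ) ∈ [0,π) × S³ : h(τ,ξ) > 0}`. -/
def diamondPlus : Set (ℝ × (Fin 4 → ℝ)) :=
  {p | p.2 ∈ sphere3 ∧ 0 ≤ p.1 ∧ p.1 < Real.pi ∧ 0 < hfun p}

/-- `Δ_{<r} = {(τ,ξ) ∈ ⋄₊ : ℏ(τ,ξ) > 0 and 𝔰(τ,ξ) < r}`. -/
noncomputable def deltaLT (r : ℝ) : Set (ℝ × (Fin 4 → ℝ)) :=
  {p ∈ diamondPlus | 0 < hbarfun p ∧ sfun p < r}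

/-- `⋄ₛ = ⋄₊ \ Δ_{<s/6}`. -/
noncomputable def diamondS (s : ℝ) : Set (ℝ × (Fin 4 → ℝ)) := diamondPlus \ deltaLT (s / 6)

/-- `⋄_{τ,s} = ({τ} × S³) ∩ ⋄ₛ`. -/
noncomputable def diamondTauS (τ s : ℝ) : Set (ℝ × (Fin 4 → ℝ)) :=
  ({τ} ×ˢ (Set.univ : Set (Fin 4 → ℝ))) ∩ diamondS s

/-- `φ(τ,ξ) = √((1 - cos τ)/(1 - ξ⁴))`. -/
noncomputable def phifun (p : ℝ × (Fin 4 → ℝ)) : ℝ :=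
  Real.sqrt ((1 - Real.cos p.1) / (1 - p.2 3))

/-- `⋄^{τ*} = {(τ,ξ) ∈ ⋄₊ : 0 ≤ τ ≤ τ* and φ(τ,ξ) ≤ √((1 - cos((τ*+π)/2))/2)}`. -/
noncomputable def diamondUpTo (τstar : ℝ) : Set (ℝ × (Fin 4 → ℝ)) :=
  {p ∈ diamondPlus | 0 ≤ p.1 ∧ p.1 ≤ τstar ∧
    phifun p ≤ Real.sqrt ((1 - Real.cos ((τstar + Real.pi) / 2)) / 2)}

set_option maxHeartbeats 1000000 in
/-- Lemma 5.5 (lem:lowerboundballsNEW) of the paper: for `s ∈ (0,1]`,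
`τ* ∈ [π/2,π)` and `τ₀ ∈ [0,π/2]` there exists `r ∈ [-1/2,1)` with
`⋄^{τ*}_{τ₀,s} = {(τ₀,ξ) : ξ ∈ S³, ξ⁴ ≤ r}`. -/
theorem stmt7 (s τstar τ₀ : ℝ) (hs : s ∈ Set.Ioc (0 : ℝ) 1)
    (hτstar : τstar ∈ Set.Ico (Real.pi / 2) Real.pi)
    (hτ₀ : τ₀ ∈ Set.Icc (0 : ℝ) (Real.pi / 2)) :
    ∃ r : ℝ, -(1 / 2) ≤ r ∧ r < 1 ∧
      diamondTauS τ₀ s ∩ diamondUpTo τstar =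
        {p : ℝ × (Fin 4 → ℝ) | p.1 = τ₀ ∧ p.2 ∈ sphere3 ∧ p.2 3 ≤ r} := by

  obtain ⟨hs0, hs1⟩ := hs
  obtain ⟨hts1, hts2⟩ := hτstar
  obtain ⟨ht01, ht02⟩ := hτ₀
  have hπ : (0:ℝ) < Real.pi := Real.pi_pos
  have hc0 : 0 ≤ Real.cos τ₀ := Real.cos_nonneg_of_mem_Icc ⟨by linarith, ht02⟩
  have hc1 : Real.cos τ₀ ≤ 1 := Real.cos_le_one τ₀
  have hσ0 : 0 ≤ Real.sin τ₀ := Real.sin_nonneg_of_nonneg_of_le_pi ht01 (by linarith)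
  have hpyth : Real.sin τ₀ ^ 2 + Real.cos τ₀ ^ 2 = 1 := Real.sin_sq_add_cos_sq τ₀
  have hθ0 : 0 ≤ (τstar + Real.pi)/2 := by linarith
  have hθπ : (τstar + Real.pi)/2 < Real.pi := by linarith
  have hcos1 : Real.cos ((τstar + Real.pi)/2) ≤ -(1/2) := by
    have h1 : Real.cos ((τstar + Real.pi)/2) ≤ Real.cos (2*Real.pi/3) :=
      Real.cos_le_cos_of_nonneg_of_le_pi (by positivity) hθπ.le (by linarith)
    have h2 : Real.cos (2*Real.pi/3) = -(1/2) := by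
      have h3 : (2*Real.pi/3) = Real.pi - Real.pi/3 := by ring
      rw [h3, Real.cos_pi_sub, Real.cos_pi_div_three]
    rw [h2] at h1
    exact h1
  have hcos2 : -1 < Real.cos ((τstar + Real.pi)/2) := by
    have h1 := Real.cos_lt_cos_of_nonneg_of_le_pi hθ0 le_rfl hθπ
    rw [Real.cos_pi] at h1
    linarith
  have hC34 : 3/4 ≤ (1 - Real.cos ((τstar + Real.pi)/2))/2 := by linarith
  have hC1 : (1 - Real.cos ((τstar + Real.pi)/2))/2 < 1 := by linarith
  have hC0 : (0:ℝ) < (1 - Real.cos ((τstar + Real.pi)/2))/2 := by linarith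
  obtain ⟨r, hr1, hr2, hiff⟩ :=
    lower_iff (s/6) (Real.cos τ₀) (Real.sin τ₀) ((1 - Real.cos ((τstar + Real.pi)/2))/2)
      (by linarith) (by linarith) hc0 hc1 hσ0 hpyth hC34 hC1
  refine ⟨r, hr1, hr2, ?_⟩
  ext ⟨τ, ξ⟩
  simp only [diamondTauS, diamondS, diamondUpTo, deltaLT, diamondPlus, sphere3,
    sfun, hfun, hbarfun, phifun, Set.mem_inter_iff, Set.mem_diff, Set.mem_sep_iff,
    Set.mem_setOf_eq, Set.mem_prod, Set.mem_singleton_iff, Set.mem_univ, and_true, true_and]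
  constructor
  · rintro ⟨⟨hττ, ⟨hsph, -, -, hhfun⟩, hnot⟩, -, -, -, hφ⟩
    subst hττ
    have hx2 : ξ 3 ^ 2 ≤ 1 := by nlinarith [sq_nonneg (ξ 0), sq_nonneg (ξ 1), sq_nonneg (ξ 2)]
    have hxu : ξ 3 ≤ 1 := by nlinarith [sq_nonneg (ξ 3 - 1)]
    have hxl : -1 ≤ ξ 3 := by nlinarith [sq_nonneg (ξ 3 + 1)]
    have hxc : ξ 3 < Real.cos τ := by linarith
    have h1x : 0 < 1 - ξ 3 := by linarith
    refine ⟨rfl, hsph, (hiff (ξ 3) hxl hxu).2 ⟨hxc, ?_, ?_⟩⟩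
    · intro hden
      by_contra hlt
      push_neg at hlt
      exact hnot ⟨⟨hsph, ht01, by linarith, by linarith⟩, hden, hlt⟩
    · have hnn : 0 ≤ (1 - Real.cos τ)/(1 - ξ 3) := div_nonneg (by linarith) h1x.le
      have h2 : (1 - Real.cos τ)/(1 - ξ 3) ≤ (1 - Real.cos ((τstar + Real.pi)/2))/2 := by
        calc (1 - Real.cos τ)/(1 - ξ 3)
            = Real.sqrt ((1 - Real.cos τ)/(1 - ξ 3)) ^ 2 := (Real.sq_sqrt hnn).symm
          _ ≤ Real.sqrt ((1 - Real.cos ((τstar + Real.pi)/2))/2) ^ 2 :=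
              pow_le_pow_left₀ (Real.sqrt_nonneg _) hφ 2
          _ = (1 - Real.cos ((τstar + Real.pi)/2))/2 := Real.sq_sqrt hC0.le
      rw [div_le_iff₀ h1x] at h2
      linarith
  · rintro ⟨hττ, hsph, hxr⟩
    subst hττ
    have hx2 : ξ 3 ^ 2 ≤ 1 := by nlinarith [sq_nonneg (ξ 0), sq_nonneg (ξ 1), sq_nonneg (ξ 2)]
    have hxu : ξ 3 ≤ 1 := by nlinarith [sq_nonneg (ξ 3 - 1)]
    have hxl : -1 ≤ ξ 3 := by nlinarith [sq_nonneg (ξ 3 + 1)]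
    obtain ⟨hxc, hscond, hφc⟩ := (hiff (ξ 3) hxl hxu).1 hxr
    have h1x : 0 < 1 - ξ 3 := by linarith
    have hmem : (ξ 0 ^ 2 + ξ 1 ^ 2 + ξ 2 ^ 2 + ξ 3 ^ 2 = 1 ∧ 0 ≤ τ ∧ τ < Real.pi ∧
        0 < Real.cos τ - ξ 3) := ⟨hsph, ht01, by linarith, by linarith⟩
    refine ⟨⟨rfl, hmem, ?_⟩, hmem, ht01, by linarith, ?_⟩
    · rintro ⟨-, hden, hlt⟩
      exact absurd hlt (not_lt.2 (hscond hden))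
    · apply Real.sqrt_le_sqrt
      rw [div_le_iff₀ h1x]
      linarith
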